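/- In the bijection given by the Diamond Principle between barcodes of two filtrations related by a Mayer–Vietoris diamond at index j, an interval is mapped to a different interval or a different homological dimension only if it contains some but not all of the indices {j-1, j, j+1}. -/
import Mathlib

/-- The interval mapping of the Diamond Principle at index `j`:
`[b,j-1] ↦ [b,j]`, `[b,j] ↦ [b,j-1]`, `[j,d] ↦ [j+1,d]`, `[j+1,d] ↦ [j,d]`,
and all other intervals are fixed. -/
def fDiamond (j : ℕ) (x : ℕ × ℕ) : ℕ × ℕ :=
  if x.2 = j - 1 then (x.1, j)
  else if x.2 = j then (x.1, j - 1)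
  else if x.1 = j then (j + 1, x.2)
  else if x.1 = j + 1 then (j, x.2)
  else x
/-- In the Diamond Principle bijection at index `j`, an interval `[b,d]`
is mapped to a different interval, or to the same interval in a different homological
dimension (which happens exactly for `[j,j]`), only if `[b,d]` contains some but not all
of the indices `{j-1, j, j+1}`. -/
theorem diamond_moved_intervals_straddle (j b d : ℕ) (hj : 1 ≤ j) (hbd : b ≤ d)
    (hchange : fDiamond j (b, d) ≠ (b, d) ∨ (b, d) = (j, j)) :
    (∃ x ∈ ({j - 1, j, j + 1} : Set ℕ), b ≤ x ∧ x ≤ d) ∧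
    ¬(∀ x ∈ ({j - 1, j, j + 1} : Set ℕ), b ≤ x ∧ x ≤ d) := by
  simp only [Set.mem_insert_iff, Set.mem_singleton_iff]
  constructor
  · by_cases h1 : d = j - 1
    · exact ⟨j - 1, Or.inl rfl, by omega⟩
    by_cases h2 : d = j
    · exact ⟨j, Or.inr (Or.inl rfl), by omega⟩
    by_cases h3 : b = j
    · exact ⟨j, Or.inr (Or.inl rfl), by omega⟩
    by_cases h4 : b = j + 1
    · exact ⟨j + 1, Or.inr (Or.inr rfl), by omega⟩
    · simp only [fDiamond, h1, h2, h3, h4, if_false, ne_eq, not_true_eq_false, false_or,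
        Prod.mk.injEq] at hchange
      exact hchange.1.elim
  · intro hall
    have h1 := hall (j - 1) (Or.inl rfl)
    have h2 := hall j (Or.inr (Or.inl rfl))
    have h3 := hall (j + 1) (Or.inr (Or.inr rfl))
    have hd1 : d ≠ j - 1 := by omega
    have hd2 : d ≠ j := by omega
    have hb1 : b ≠ j := by omega
    have hb2 : b ≠ j + 1 := by omega
    simp only [fDiamond, hd1, hd2, hb1, hb2, if_false, ne_eq, not_true_eq_false, false_or,
      Prod.mk.injEq] at hchange
    exact hchange.1.elim
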